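/- Let M and M' be matchings of a graph G such that M △ M' is a single alternating cycle of positive length. Then in any sequence of matchings M = M_0, M_1, ..., M_k = M' where each M_{i+1} differs from M_i by adding one edge of M' and removing the adjacent edges of M_i, there is some intermediate index 0 < i < k with |M_i| < |M| (equivalently, |M_i| ≤ |M| − 1). -/

import Mathlib

/-- `M` is a matching of the simple graph `G`: a set of edges of `G` that are
pairwise vertex-disjoint. -/
def IsMatching {V : Type*} (G : SimpleGraph V) (M : Finset (Sym2 V)) : Prop :=
  (∀ e ∈ M, e ∈ G.edgeSet) ∧
  ∀ e ∈ M, ∀ f ∈ M, e ≠ f → ∀ v : V, v ∈ e → v ∉ f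

/-- A finite set `C` of edges forms a single (simple) cycle: there is a cycle walk
whose edge set is exactly `C`. -/
def IsCycleEdgeSet {V : Type*} [DecidableEq V] (C : Finset (Sym2 V)) : Prop :=
  ∃ (v : V) (p : (SimpleGraph.fromEdgeSet (↑C : Set (Sym2 V))).Walk v v),
    p.IsCycle ∧ p.edges.toFinset = C

open SimpleGraph in
private lemma two_edges {V : Type*} {G : SimpleGraph V} {u : V} (q : G.Walk u u)
    (hq : q.IsCycle) :
    ∃ f₁ ∈ q.edges, ∃ f₂ ∈ q.edges, f₁ ≠ f₂ ∧ u ∈ f₁ ∧ u ∈ f₂ := by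
  have hlen : 3 ≤ q.length := hq.three_le_length
  have hnodup : q.edges.Nodup := hq.isTrail.edges_nodup
  cases q with
  | nil => simp at hlen
  | @cons _ b _ h p =>
    refine ⟨s(u, b), by simp, ?_⟩
    have hrev : (Walk.cons h p).reverse.edges = (Walk.cons h p).edges.reverse :=
      Walk.edges_reverse _
    cases hr : (Walk.cons h p).reverse with
    | nil =>
      exfalso
      have := congrArg Walk.length hr
      simp [Walk.length_reverse] at this
    | @cons _ c _ h' p' =>
      refine ⟨s(u, c), ?_, ?_, by simp, by simp⟩
      · have : s(u,c) ∈ (Walk.cons h p).reverse.edges := by rw [hr]; simp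
        rwa [hrev, List.mem_reverse] at this
      · intro heq
        have key : p'.edges.reverse ++ [s(u,c)] = s(u,b) :: p.edges := by
          have h2 : (Walk.cons h' p').edges = ((Walk.cons h p).edges).reverse := by
            rw [← hrev, hr]
          have h3 := congrArg List.reverse h2
          simpa using h3
        have hplen : 1 ≤ p.edges.length := by
          rw [Walk.length_edges]
          simp only [Walk.length_cons] at hlen; omega
        have hne' : p'.edges.reverse ≠ [] := by
          intro hnil
          rw [hnil] at key
          have := congrArg List.length key
          simp only [List.nil_append, List.length_cons, List.length_singleton, List.length_nil] at this
          rw [Walk.length_edges] at hplen this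
          omega
        obtain ⟨a, t, hat⟩ := List.exists_cons_of_ne_nil hne'
        rw [hat] at key
        simp only [List.cons_append, List.cons.injEq] at key
        have hmem : s(u,c) ∈ p.edges := by
          rw [← key.2]; simp
        rw [← heq] at hmem
        have := (List.nodup_cons.mp (by simpa using hnodup)).1
        exact this hmem

open SimpleGraph in
private lemma other_edge {V : Type*} [DecidableEq V] {C : Finset (Sym2 V)}
    (hC : IsCycleEdgeSet C) {e : Sym2 V} (he : e ∈ C) {u : V} (hu : u ∈ e) :
    ∃ f ∈ C, f ≠ e ∧ u ∈ f := by
  obtain ⟨v, p, hp, hpe⟩ := hC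
  have hep : e ∈ p.edges := by rw [← hpe] at he; simpa using he
  have hsup : u ∈ p.support := by
    induction e using Sym2.ind with
    | _ x y =>
      rcases Sym2.mem_iff.mp hu with rfl | rfl
      · exact p.fst_mem_support_of_mem_edges hep
      · exact p.snd_mem_support_of_mem_edges hep
  set q := p.rotate u hsup with hqdef
  have hq : q.IsCycle := hp.rotate hsup
  obtain ⟨f₁, hf₁, f₂, hf₂, hne, hu₁, hu₂⟩ := two_edges q hq
  have hrot := p.rotate_edges u hsup
  have hC₁ : f₁ ∈ C := by rw [← hpe]; simp [List.mem_toFinset]; exact hrot.mem_iff.mp hf₁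
  have hC₂ : f₂ ∈ C := by rw [← hpe]; simp [List.mem_toFinset]; exact hrot.mem_iff.mp hf₂
  by_cases h1 : f₁ = e
  · exact ⟨f₂, hC₂, by rw [← h1]; exact hne.symm, hu₂⟩
  · exact ⟨f₁, hC₁, h1, hu₁⟩

/-- If `M △ M'` is a single alternating cycle of positive length (so `M ≠ M'` and
`|M| = |M'|`), then any transformation `M = M_0, M_1, …, M_k = M'`, in which each
`M_{i+1}` is obtained from `M_i` by adding one edge of `M' \ M_i` and removing the
edges of `M_i` incident to it, passes through some intermediate matching of size
strictly less than `|M|`. -/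
theorem stmt19 {V : Type*} [Fintype V] [DecidableEq V] (G : SimpleGraph V)
    (M M' : Finset (Sym2 V)) (hM : IsMatching G M) (hM' : IsMatching G M')
    (hcard : M.card = M'.card) (hne : M ≠ M')
    (hcyc : IsCycleEdgeSet ((M \ M') ∪ (M' \ M)))
    (k : ℕ) (Ms : ℕ → Finset (Sym2 V)) (h0 : Ms 0 = M) (hk : Ms k = M')
    (hstep : ∀ i < k, ∃ e ∈ M' \ Ms i,
      Ms (i + 1) = insert e ((Ms i).filter fun f => ∀ v : V, v ∈ e → v ∉ f)) :
    ∃ i, 0 < i ∧ i < k ∧ (Ms i).card < M.card := by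
  have hk0 : 0 < k := by
    rcases Nat.eq_zero_or_pos k with h | h
    · exact absurd (h0 ▸ h ▸ hk) hne
    · exact h
  obtain ⟨e, hee, h1⟩ := hstep 0 hk0
  rw [h0] at hee h1
  rw [Finset.mem_sdiff] at hee
  obtain ⟨heM', heM⟩ := hee
  set C := (M \ M') ∪ (M' \ M) with hC
  have heC : e ∈ C := Finset.mem_union_right _ (Finset.mem_sdiff.mpr ⟨heM', heM⟩)
  have hdiag : ¬ e.IsDiag := by
    have := hM'.1 e heM'
    exact G.not_isDiag_of_mem_edgeSet this
  have hex : ∀ z : Sym2 V, ¬ z.IsDiag → ∃ x y, x ≠ y ∧ z = s(x, y) := by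
    intro z
    induction z using Sym2.ind with
    | _ x y => exact fun h => ⟨x, y, fun hxy => h (Sym2.mk_isDiag_iff.mpr hxy), rfl⟩
  obtain ⟨u, w, huw, rfl⟩ := hex e hdiag
  have getM : ∀ x : V, x ∈ s(u, w) → ∃ f ∈ M, f ≠ s(u, w) ∧ x ∈ f := by
    intro x hx
    obtain ⟨f, hfC, hfe, hxf⟩ := other_edge hcyc heC hx
    rw [hC, Finset.mem_union, Finset.mem_sdiff, Finset.mem_sdiff] at hfC
    rcases hfC with ⟨hf1, _⟩ | ⟨hf1, _⟩
    · exact ⟨f, hf1, hfe, hxf⟩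
    · exact absurd hxf (hM'.2 _ heM' f hf1 (Ne.symm hfe) x hx)
  obtain ⟨fu, hfuM, hfue, hufu⟩ := getM u (by simp)
  obtain ⟨fw, hfwM, hfwe, hwfw⟩ := getM w (by simp)
  have hfufw : fu ≠ fw := by
    intro hEq
    have : fu = s(u, w) := (Sym2.mem_and_mem_iff huw).mp ⟨hufu, hEq ▸ hwfw⟩
    exact hfue this
  have hsub : (M.filter fun f => ∀ v : V, v ∈ s(u,w) → v ∉ f) ⊆ (M.erase fu).erase fw := by
    intro x hx
    rw [Finset.mem_filter] at hx
    rw [Finset.mem_erase, Finset.mem_erase]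
    refine ⟨?_, ?_, hx.1⟩
    · intro hEq; exact (hx.2 w (by simp)) (hEq ▸ hwfw)
    · intro hEq; exact (hx.2 u (by simp)) (hEq ▸ hufu)
  have hfw' : fw ∈ M.erase fu := Finset.mem_erase.mpr ⟨hfufw.symm, hfwM⟩
  have hcard2 : ((M.erase fu).erase fw).card = M.card - 2 := by
    rw [Finset.card_erase_of_mem hfw', Finset.card_erase_of_mem hfuM]; omega
  have hMcard : 2 ≤ M.card := by
    have : ({fu, fw} : Finset (Sym2 V)) ⊆ M := by
      intro x hx; rw [Finset.mem_insert, Finset.mem_singleton] at hx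
      rcases hx with rfl | rfl <;> assumption
    calc 2 = ({fu, fw} : Finset (Sym2 V)).card := (Finset.card_pair hfufw).symm
      _ ≤ M.card := Finset.card_le_card this
  have hlt : (Ms 1).card < M.card := by
    rw [h1]
    calc (insert s(u,w) (M.filter fun f => ∀ v : V, v ∈ s(u,w) → v ∉ f)).card
        ≤ (M.filter fun f => ∀ v : V, v ∈ s(u,w) → v ∉ f).card + 1 :=
          Finset.card_insert_le _ _
      _ ≤ ((M.erase fu).erase fw).card + 1 := by
          exact Nat.add_le_add_right (Finset.card_le_card hsub) 1
      _ = M.card - 2 + 1 := by rw [hcard2]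
      _ < M.card := by omega
  have hk1 : 1 < k := by
    rcases Nat.lt_or_ge 1 k with h | h
    · exact h
    · exfalso
      have : k = 1 := by omega
      rw [this] at hk
      rw [hk, hcard] at hlt
      exact lt_irrefl _ hlt
  exact ⟨1, one_pos, hk1, hlt⟩
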